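/- The set ℒ_2(4) equals { (2i+1)/(2i−1) : i a positive integer }. -/

import Mathlib

open Finset

/-- The set `ℒ_r(α)`: the smallest set of reals containing `α - 1` and closed under the rule:
for `1 ≤ s ≤ r - 1` and `q₁, …, q_s ∈ ℒ_r(α)`, if `β := α − 1 − s − ∑ qᵢ⁻¹ > 0`
then `β ∈ ℒ_r(α)`. -/
inductive LSet (r : ℕ) (α : ℝ) : ℝ → Prop
  | base : LSet r α (α - 1)
  | step (s : ℕ) (hs1 : 1 ≤ s) (hsr : s ≤ r - 1) (q : Fin s → ℝ)
      (hmem : ∀ i, LSet r α (q i))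
      (hpos : 0 < α - 1 - (s : ℝ) - ∑ i, (q i)⁻¹) :
      LSet r α (α - 1 - (s : ℝ) - ∑ i, (q i)⁻¹)

theorem stmt_9 :
    {x : ℝ | LSet 2 4 x} =
      {x : ℝ | ∃ i : ℕ, 0 < i ∧ x = (2 * (i : ℝ) + 1) / (2 * (i : ℝ) - 1)} := by
  ext x
  simp only [Set.mem_setOf_eq]
  constructor
  · intro h
    induction h with
    | base => exact ⟨1, one_pos, by norm_num⟩
    | step s hs1 hsr q hmem hpos ih =>
      interval_cases s
      obtain ⟨i, hi, hq⟩ := ih 0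
      refine ⟨i + 1, by omega, ?_⟩
      have hi1 : (1:ℝ) ≤ i := by exact_mod_cast hi
      have h1 : (2 * (i:ℝ) - 1) ≠ 0 := by nlinarith
      have h2 : (2 * (i:ℝ) + 1) ≠ 0 := by nlinarith
      rw [Fin.sum_univ_one, hq, inv_div]
      push_cast
      have h3 : 2 * ((i:ℝ) + 1) - 1 ≠ 0 := by nlinarith
      field_simp
      ring
  · rintro ⟨i, hi, rfl⟩
    induction i with
    | zero => omega
    | succ n ihn =>
      rcases Nat.eq_zero_or_pos n with h0 | hn
      · subst h0
        norm_num
        rw [show (3:ℝ) = (4:ℝ) - 1 by norm_num]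
        exact LSet.base
      · have hmem := ihn hn
        have hn1 : (1:ℝ) ≤ n := by exact_mod_cast hn
        have h1 : (2 * (n:ℝ) - 1) ≠ 0 := by nlinarith
        have h2 : (0:ℝ) < 2 * (n:ℝ) + 1 := by nlinarith
        have key := LSet.step (r := 2) (α := 4) 1 le_rfl le_rfl
          (fun _ => (2 * (n:ℝ) + 1) / (2 * (n:ℝ) - 1)) (fun _ => hmem) ?_
        · convert key using 1
          rw [Fin.sum_univ_one]
          rw [inv_div]
          have h2' : (2 * (n:ℝ) + 1) ≠ 0 := ne_of_gt h2
          push_cast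
          have h3 : 2 * ((n:ℝ) + 1) - 1 ≠ 0 := by nlinarith
          field_simp
          ring
        · rw [Fin.sum_univ_one]
          rw [inv_div]
          have hlt : (2 * (n:ℝ) - 1) / (2 * (n:ℝ) + 1) < 1 := by
            rw [div_lt_one h2]; linarith
          push_cast
          linarith
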